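/- Let P and Q be relatively prime two-variable polynomials with |P(z,w)| ≥ |Q(z,w)| on the open bidisk and |P(z,w)| = |Q(z,w)| on T^2, with P not identically zero. Then P has no zeros in the open bidisk. -/

import Mathlib

open ComplexConjugate
open Polynomial Filter Topology
open scoped nonZeroDivisors

theorem lemA {R : Type*} [CommRing R] [IsDomain R] [UniqueFactorizationMonoid R]
    (p q : R[X]) (hp : p ≠ 0) (hrel : IsRelPrime p q) :
    ∃ a : R, a ≠ 0 ∧ ∃ u v : R[X], u * p + v * q = C a := by
  classical
  letI := UniqueFactorizationMonoid.normalizationMonoid (α := R)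
  letI := UniqueFactorizationMonoid.toNormalizedGCDMonoid R
  set K := FractionRing R
  let φ : R →+* K := algebraMap R K
  have hφ : Function.Injective φ := IsFractionRing.injective R K
  have hmapinj : Function.Injective (Polynomial.map φ) := Polynomial.map_injective φ hφ
  have hsmul : ∀ (r : R) (f : K[X]), r • f = C (φ r) * f := by
    intro r f
    rw [Algebra.smul_def, Polynomial.algebraMap_apply]
  -- coprimality over K
  have hcop : IsCoprime (p.map φ) (q.map φ) := by
    apply IsRelPrime.isCoprime
    intro d hdp hdq
    have hd0 : d ≠ 0 := by
      rintro rfl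
      exact hp (hmapinj (by simpa using (zero_dvd_iff.mp hdp)))
    obtain ⟨s, hs⟩ := IsLocalization.integerNormalization_map_to_map R⁰ d
    have hsne : φ (s : R) ≠ 0 := by
      simpa [φ, map_eq_zero_iff _ hφ] using nonZeroDivisors.ne_zero s.2
    have hin0 : IsLocalization.integerNormalization R⁰ d ≠ 0 := by
      intro h
      rw [h, Polynomial.map_zero] at hs
      rw [hsmul] at hs
      exact hd0 (by simpa [hsne] using hs.symm)
    set c := (IsLocalization.integerNormalization R⁰ d).content with hc
    have hcne : c ≠ 0 := fun h => hin0 (content_eq_zero_iff.mp h)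
    set d' := (IsLocalization.integerNormalization R⁰ d).primPart with hd'
    have hprim : d'.IsPrimitive := isPrimitive_primPart _
    have hfac : C (φ c) * d'.map φ = C (φ (s : R)) * d := by
      rw [← Polynomial.map_C, ← Polynomial.map_mul, ← eq_C_content_mul_primPart, hs, hsmul]
    have hdd : d = C ((φ (s : R))⁻¹ * φ c) * d'.map φ := by
      rw [C_mul, mul_assoc, hfac, ← mul_assoc, ← C_mul, inv_mul_cancel₀ hsne, C_1, one_mul]
    -- d' divides any f with d ∣ map f
    have claim : ∀ f : R[X], f ≠ 0 → d ∣ f.map φ → d' ∣ f := by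
      intro f hf hdvd
      have h1 : d'.map φ ∣ f.map φ := dvd_trans ⟨C ((φ (s : R))⁻¹ * φ c), by rw [hdd]; ring⟩ hdvd
      have hfc : φ f.content ≠ 0 := by
        simpa [φ, map_eq_zero_iff _ hφ] using (fun h => hf (content_eq_zero_iff.mp h))
      have h2 : d'.map φ ∣ f.primPart.map φ := by
        obtain ⟨u, hu⟩ := (Polynomial.isUnit_C.mpr (isUnit_iff_ne_zero.mpr hfc))
        have : f.map φ = ↑u * f.primPart.map φ := by
          rw [hu, ← Polynomial.map_C, ← Polynomial.map_mul, ← eq_C_content_mul_primPart]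
        rw [this] at h1
        exact (Units.dvd_mul_left).mp h1
      exact dvd_trans
        (hprim.dvd_of_fraction_map_dvd_fraction_map h2)
        (primPart_dvd f)
    have hd'p : d' ∣ p := claim p hp hdp
    have hd'q : d' ∣ q := by
      by_cases hq : q = 0
      · simp [hq]
      · exact claim q hq hdq
    have : IsUnit d' := hrel hd'p hd'q
    rw [hdd]
    exact (Polynomial.isUnit_C.mpr
      (((isUnit_iff_ne_zero.mpr hsne).inv).mul (isUnit_iff_ne_zero.mpr
        (by simpa [φ, map_eq_zero_iff _ hφ] using hcne)))).mul (this.map (mapRingHom φ))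
  obtain ⟨A, B, hAB⟩ := hcop
  obtain ⟨sA, hsA⟩ := IsLocalization.integerNormalization_map_to_map R⁰ A
  obtain ⟨sB, hsB⟩ := IsLocalization.integerNormalization_map_to_map R⁰ B
  refine ⟨(sA : R) * (sB : R),
    mul_ne_zero (nonZeroDivisors.ne_zero sA.2) (nonZeroDivisors.ne_zero sB.2),
    C (sB : R) * IsLocalization.integerNormalization R⁰ A,
    C (sA : R) * IsLocalization.integerNormalization R⁰ B, ?_⟩
  apply hmapinj
  rw [Polynomial.map_add, Polynomial.map_mul, Polynomial.map_mul, Polynomial.map_mul,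
    Polynomial.map_mul, hsA, hsB, Polynomial.map_C, Polynomial.map_C, Polynomial.map_C,
    hsmul, hsmul, map_mul]
  rw [C_mul]
  calc C (φ ↑sB) * (C (φ ↑sA) * A) * p.map φ + C (φ ↑sA) * (C (φ ↑sB) * B) * q.map φ
      = C (φ ↑sA) * C (φ ↑sB) * (A * p.map φ + B * q.map φ) := by ring
    _ = C (φ ↑sA) * C (φ ↑sB) := by rw [hAB, mul_one]

noncomputable def ι : MvPolynomial (Fin 1) ℂ ≃+* Polynomial ℂ :=
  (MvPolynomial.finSuccEquiv ℂ 0).toRingEquiv.trans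
    (Polynomial.mapEquiv (MvPolynomial.isEmptyAlgEquiv ℂ (Fin 0)).toRingEquiv)

theorem vec1 (x : ℂ) : (![x] : Fin 1 → ℂ) = Fin.cons x Fin.elim0 := by
  funext i; fin_cases i <;> rfl

theorem vec2 (z w : ℂ) : (![z, w] : Fin 2 → ℂ) = Fin.cons z ![w] := by
  funext i; fin_cases i <;> rfl

theorem ι_eval (g : MvPolynomial (Fin 1) ℂ) (x : ℂ) :
    (ι g).eval x = MvPolynomial.eval ![x] g := by
  rw [vec1, MvPolynomial.eval_eq_eval_mv_eval']
  show Polynomial.eval x (Polynomial.map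
      ((MvPolynomial.isEmptyAlgEquiv ℂ (Fin 0)) : MvPolynomial (Fin 0) ℂ →+* ℂ)
      (MvPolynomial.finSuccEquiv ℂ 0 g)) = _
  congr 2
  apply MvPolynomial.ringHom_ext
  · intro r; simp only [RingHom.coe_coe, MvPolynomial.isEmptyAlgEquiv_apply]; exact (MvPolynomial.coeff_zero_C r).trans (MvPolynomial.eval_C r).symm
  · intro i; exact i.elim0

noncomputable def T : MvPolynomial (Fin 2) ℂ ≃+* Polynomial (Polynomial ℂ) :=
  (MvPolynomial.finSuccEquiv ℂ 1).toRingEquiv.trans (Polynomial.mapEquiv ι)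

theorem T_eval (f : MvPolynomial (Fin 2) ℂ) (z w : ℂ) :
    MvPolynomial.eval ![z, w] f
      = Polynomial.eval z (Polynomial.map (Polynomial.evalRingHom w) (T f)) := by
  rw [vec2, MvPolynomial.eval_eq_eval_mv_eval']
  show _ = Polynomial.eval z (Polynomial.map _
      (Polynomial.map (ι : MvPolynomial (Fin 1) ℂ →+* Polynomial ℂ) _))
  rw [Polynomial.map_map]
  congr 2
  exact RingHom.ext fun g => (ι_eval g w).symm

theorem keyPoly (F : Polynomial (Polynomial ℂ)) (z0 w0 : ℂ) (hw0 : ‖w0‖ < 1)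
    (h0 : (F.map (evalRingHom z0)).eval w0 = 0)
    (hs : F.map (evalRingHom z0) ≠ 0) :
    ∀ᶠ z in 𝓝 z0, ∃ w : ℂ, ‖w‖ < 1 ∧ (F.map (evalRingHom z)).eval w = 0 := by
  classical
  set G : ℂ × ℂ → ℂ := fun p => (F.map (evalRingHom p.1)).eval p.2 with hG
  have hGcont : Continuous G := by
    have h : G = fun p : ℂ × ℂ => ∑ i ∈ Finset.range (F.natDegree + 1),
        (F.coeff i).eval p.1 * p.2 ^ i := by
      funext p
      rw [hG]
      simp only
      rw [Polynomial.eval_map, Polynomial.eval₂_eq_sum_range]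
      rfl
    rw [h]
    exact continuous_finset_sum _ fun i _ =>
      (((F.coeff i).continuous).comp continuous_fst).mul ((continuous_pow i).comp continuous_snd)
  set s0 : Polynomial ℂ := F.map (evalRingHom z0) with hs0
  have hfin : Set.Finite {x : ℂ | s0.IsRoot x} := s0.finite_setOf_isRoot hs
  have hfin' : Set.Finite ({x : ℂ | s0.IsRoot x} \ {w0}) := hfin.diff
  have hcl : IsClosed ({x : ℂ | s0.IsRoot x} \ {w0}) := hfin'.isClosed
  obtain ⟨ε, hε, hball⟩ := Metric.isOpen_iff.mp hcl.isOpen_compl w0 (by simp)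
  set r : ℝ := min (ε/2) ((1 - ‖w0‖)/2) with hrdef
  have hr : 0 < r := lt_min (by linarith) (by linarith)
  have hcbsub : Metric.closedBall w0 r ⊆ ({x : ℂ | s0.IsRoot x} \ {w0})ᶜ := by
    intro x hx
    apply hball
    rw [Metric.mem_ball]
    calc dist x w0 ≤ r := Metric.mem_closedBall.mp hx
      _ ≤ ε/2 := min_le_left _ _
      _ < ε := by linarith
  have habs : ∀ w ∈ Metric.closedBall w0 r, ‖w‖ < 1 := by
    intro w hw
    have h1 : dist w 0 ≤ dist w w0 + dist w0 0 := dist_triangle _ _ _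
    have h2 : dist w w0 ≤ r := Metric.mem_closedBall.mp hw
    have h3 : r ≤ (1 - ‖w0‖)/2 := min_le_right _ _
    simp only [dist_zero_right] at h1
    rw [Complex.dist_eq] at h1 h2
    linarith
  -- minimum on the sphere
  obtain ⟨w1, hw1mem, hw1min'⟩ := (isCompact_sphere w0 r).exists_isMinOn
    (NormedSpace.sphere_nonempty.mpr hr.le)
    ((continuous_norm.comp s0.continuous).continuousOn)
  have hw1min : ∀ w ∈ Metric.sphere w0 r,
      ‖s0.eval w1‖ ≤ ‖s0.eval w‖ := fun w hw => hw1min' hw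
  set m : ℝ := ‖s0.eval w1‖ with hm
  have hmpos : 0 < m := by
    have h1 : w1 ∈ Metric.closedBall w0 r := Metric.sphere_subset_closedBall hw1mem
    have h2 : w1 ≠ w0 := by
      intro h
      have h' := Metric.mem_sphere.mp hw1mem
      rw [h] at h'
      simp at h'
      exact hr.ne' h'.symm
    have h3 := hcbsub h1
    simp only [Set.mem_compl_iff, Set.mem_diff, Set.mem_setOf_eq, Set.mem_singleton_iff,
      not_and, not_not] at h3
    have hnr : ¬ s0.IsRoot w1 := fun hroot => h2 (h3 hroot)
    simpa [hm, norm_pos_iff] using hnr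
  -- eventually near z0
  have ev1 : ∀ᶠ z in 𝓝 z0, ∀ w ∈ Metric.sphere w0 r,
      ‖G (z, w) - G (z0, w)‖ < m/2 := by
    apply (isCompact_sphere w0 r).eventually_forall_of_forall_eventually
    intro w _
    have hopen : IsOpen {p : ℂ × ℂ | ‖G p - G (z0, p.2)‖ < m/2} :=
      isOpen_lt (continuous_norm.comp (hGcont.sub
        (hGcont.comp (continuous_const.prodMk continuous_snd)))) continuous_const
    exact hopen.eventually_mem (by simp [half_pos hmpos])
  have ev2 : ∀ᶠ z in 𝓝 z0, ‖G (z, w0)‖ < m/2 := by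
    have hopen : IsOpen {z : ℂ | ‖G (z, w0)‖ < m/2} :=
      isOpen_lt (continuous_norm.comp
        (hGcont.comp (continuous_id.prodMk continuous_const))) continuous_const
    apply hopen.eventually_mem
    simp only [Set.mem_setOf_eq]
    have hz00 : G (z0, w0) = 0 := h0
    rw [hz00]
    simpa using half_pos hmpos
  filter_upwards [ev1, ev2] with z h1 h2
  by_contra hno
  push_neg at hno
  set f : ℂ → ℂ := fun w => (F.map (evalRingHom z)).eval w with hf
  have hsphere_lb : ∀ w ∈ Metric.sphere w0 r, m/2 ≤ ‖f w‖ := by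
    intro w hw
    have ha := h1 w hw
    have hb := hw1min w hw
    have hc : ‖s0.eval w‖ - ‖f w‖ ≤ ‖s0.eval w - f w‖ := by
      exact norm_sub_norm_le (s0.eval w) (f w)
    have hd : ‖s0.eval w - f w‖ = ‖f w - s0.eval w‖ := by
      exact norm_sub_rev (s0.eval w) (f w)
    have he : G (z, w) - G (z0, w) = f w - s0.eval w := rfl
    rw [he] at ha
    linarith
  -- f does not vanish on the closed ball
  have hnov : ∀ w ∈ Metric.closedBall w0 r, f w ≠ 0 := by
    intro w hw
    rcases eq_or_lt_of_le (Metric.mem_closedBall.mp hw) with hws | hwb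
    · have : w ∈ Metric.sphere w0 r := Metric.mem_sphere.mpr hws
      have := hsphere_lb w this
      intro h'
      rw [h'] at this
      simp at this
      linarith
    · intro h'
      have hwin : ‖w‖ < 1 := habs w hw
      exact absurd h' (by
        have := hno w hwin
        exact this)
  -- apply maximum modulus to 1/f
  have hfd : Differentiable ℂ f := (F.map (evalRingHom z)).differentiable
  have hgd : DifferentiableOn ℂ (fun w => (f w)⁻¹) (Metric.closedBall w0 r) :=
    (hfd.differentiableOn).inv hnov
  have hdc : DiffContOnCl ℂ (fun w => (f w)⁻¹) (Metric.ball w0 r) := by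
    apply DifferentiableOn.diffContOnCl
    rw [closure_ball w0 hr.ne']
    exact hgd
  have hbound : ∀ x ∈ frontier (Metric.ball w0 r), ‖(f x)⁻¹‖ ≤ (m/2)⁻¹ := by
    intro x hx
    rw [frontier_ball w0 hr.ne'] at hx
    rw [norm_inv]
    exact inv_anti₀ (half_pos hmpos) (hsphere_lb x hx)
  have hmax := Complex.norm_le_of_forall_mem_frontier_norm_le Metric.isBounded_ball hdc hbound
    (subset_closure (Metric.mem_ball_self hr) : w0 ∈ closure (Metric.ball w0 r))
  rw [norm_inv] at hmax
  have hf0 : f w0 ≠ 0 := hnov w0 (Metric.mem_closedBall_self hr.le)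
  have hf0pos : 0 < ‖f w0‖ := by simpa [norm_pos_iff] using hf0
  have : m/2 ≤ ‖f w0‖ := by
    have := (inv_le_inv₀ hf0pos (half_pos hmpos)).mp hmax
    linarith
  have hw0ev : f w0 = G (z, w0) := rfl
  rw [hw0ev] at this
  linarith

noncomputable def E : MvPolynomial (Fin 2) ℂ ≃+* Polynomial (Polynomial ℂ) :=
  (MvPolynomial.renameEquiv ℂ (Equiv.swap (0 : Fin 2) 1)).toRingEquiv.trans T

theorem E_eval (f : MvPolynomial (Fin 2) ℂ) (z w : ℂ) :
    MvPolynomial.eval ![z, w] f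
      = Polynomial.eval w (Polynomial.map (Polynomial.evalRingHom z) (E f)) := by
  have h1 := T_eval (MvPolynomial.rename (Equiv.swap (0 : Fin 2) 1) f) w z
  have h2 : (![w, z] ∘ (Equiv.swap (0 : Fin 2) 1)) = ![z, w] := by
    funext i
    fin_cases i <;> simp [Equiv.swap_apply_of_ne_of_ne]
  rw [MvPolynomial.eval_rename] at h1
  rw [h2] at h1
  exact h1

theorem stmt_15 (P Q : MvPolynomial (Fin 2) ℂ)
    (hcoprime : ∀ d : MvPolynomial (Fin 2) ℂ, d ∣ P → d ∣ Q → IsUnit d)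
    (hP : P ≠ 0)
    (hge : ∀ z w : ℂ, ‖z‖ < 1 → ‖w‖ < 1 →
      ‖MvPolynomial.eval ![z, w] Q‖ ≤ ‖MvPolynomial.eval ![z, w] P‖)
    (heq : ∀ z w : ℂ, ‖z‖ = 1 → ‖w‖ = 1 →
      ‖MvPolynomial.eval ![z, w] P‖ = ‖MvPolynomial.eval ![z, w] Q‖) :
    ∀ z w : ℂ, ‖z‖ < 1 → ‖w‖ < 1 →
      MvPolynomial.eval ![z, w] P ≠ 0 := by
  intro z0 w0 hz0 hw0 hPzero
  -- Q also vanishes at any common zero of P in the bidisk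
  have hQvanish : ∀ z w : ℂ, ‖z‖ < 1 → ‖w‖ < 1 →
      MvPolynomial.eval ![z, w] P = 0 → MvPolynomial.eval ![z, w] Q = 0 := by
    intro z w hz hw hzero
    have := hge z w hz hw
    rw [hzero] at this
    simp only [norm_zero] at this
    exact norm_eq_zero.mp (le_antisymm this (norm_nonneg _))
  set EP : Polynomial (Polynomial ℂ) := E P with hEP
  set EQ : Polynomial (Polynomial ℂ) := E Q with hEQ
  have hEPne : EP ≠ 0 := by
    intro h
    exact hP (E.injective (by rw [← hEP, h, map_zero]))
  by_cases hsl : EP.map (evalRingHom z0) = 0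
  · -- Case B : the whole slice z = z0 of P vanishes
    have hQsl : EQ.map (evalRingHom z0) = 0 := by
      apply Polynomial.eq_zero_of_infinite_isRoot
      apply Set.Infinite.mono (s := Metric.ball (0 : ℂ) 1)
      · intro w hw
        have hw1 : ‖w‖ < 1 := by simpa using hw
        have hPz : MvPolynomial.eval ![z0, w] P = 0 := by
          rw [E_eval, ← hEP, hsl]
          simp
        have hQz := hQvanish z0 w hz0 hw1 hPz
        rw [E_eval, ← hEQ] at hQz
        exact hQz
      · exact infinite_of_mem_nhds (0 : ℂ) (Metric.ball_mem_nhds 0 one_pos)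
    have hdvdP : C (X - C z0) ∣ EP := by
      rw [Polynomial.C_dvd_iff_dvd_coeff]
      intro i
      rw [dvd_iff_isRoot]
      have := congrArg (fun g => Polynomial.coeff g i) hsl
      simpa [Polynomial.coeff_map] using this
    have hdvdQ : C (X - C z0) ∣ EQ := by
      rw [Polynomial.C_dvd_iff_dvd_coeff]
      intro i
      rw [dvd_iff_isRoot]
      have := congrArg (fun g => Polynomial.coeff g i) hQsl
      simpa [Polynomial.coeff_map] using this
    set d0 : MvPolynomial (Fin 2) ℂ := E.symm (C (X - C z0)) with hd0
    have hd0P : d0 ∣ P := by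
      obtain ⟨c, hc⟩ := hdvdP
      exact ⟨E.symm c, by
        apply E.injective
        rw [map_mul]
        simpa [hd0] using hc⟩
    have hd0Q : d0 ∣ Q := by
      obtain ⟨c, hc⟩ := hdvdQ
      exact ⟨E.symm c, by
        apply E.injective
        rw [map_mul]
        simpa [hd0] using hc⟩
    have hunit : IsUnit (C (X - C z0) : Polynomial (Polynomial ℂ)) := by
      have := hcoprime d0 hd0P hd0Q
      have h2 := this.map E
      simpa [hd0] using h2
    exact Polynomial.not_isUnit_X_sub_C z0 (Polynomial.isUnit_C.mp hunit)
  · -- Case A : the slice is a nonzero polynomial, use the analytic argument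
    have hrel : IsRelPrime EP EQ := by
      intro d hd1 hd2
      have hd1' : E.symm d ∣ P := by
        obtain ⟨c, hc⟩ := hd1
        exact ⟨E.symm c, by
          apply E.injective
          rw [map_mul]
          simpa using hc⟩
      have hd2' : E.symm d ∣ Q := by
        obtain ⟨c, hc⟩ := hd2
        exact ⟨E.symm c, by
          apply E.injective
          rw [map_mul]
          simpa using hc⟩
      have := (hcoprime _ hd1' hd2').map E
      simpa using this
    obtain ⟨a, ha, u, v, huv⟩ := lemA EP EQ hEPne hrel
    -- at any common zero (z,w) of P and Q we get a.eval z = 0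
    have haroot : ∀ z w : ℂ, MvPolynomial.eval ![z, w] P = 0 →
        MvPolynomial.eval ![z, w] Q = 0 → a.eval z = 0 := by
      intro z w hPz hQz
      have := congrArg (fun g => Polynomial.eval w (Polynomial.map (evalRingHom z) g)) huv
      simp only [Polynomial.map_add, Polynomial.map_mul, Polynomial.eval_add,
        Polynomial.eval_mul, Polynomial.map_C, Polynomial.eval_C, coe_evalRingHom] at this
      rw [hEP, hEQ] at this
      rw [← E_eval, ← E_eval] at this
      rw [hPz, hQz] at this
      simpa using this.symm
    have ev1 := keyPoly EP z0 w0 hw0 (by rw [← E_eval]; exact hPzero) hsl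
    have ev2 : ∀ᶠ z in 𝓝 z0, ‖z‖ < 1 := by
      have hopen : IsOpen {z : ℂ | ‖z‖ < 1} :=
        isOpen_lt continuous_norm continuous_const
      exact hopen.eventually_mem hz0
    have ev3 : ∀ᶠ z in 𝓝 z0, a.IsRoot z := by
      filter_upwards [ev1, ev2] with z h1 h2
      obtain ⟨w, hw, hzero⟩ := h1
      have hPz : MvPolynomial.eval ![z, w] P = 0 := by rw [E_eval, ← hEP]; exact hzero
      exact haroot z w hPz (hQvanish z w h2 hw hPz)
    have : Set.Infinite {x : ℂ | a.IsRoot x} :=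
      Set.Infinite.mono (fun x hx => hx) (infinite_of_mem_nhds z0 ev3)
    exact ha (Polynomial.eq_zero_of_infinite_isRoot a this)
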